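/- Let f : ℝ → ℝ be three times continuously differentiable. Define H : ℝ² → ℝ by H(x,y) = (f(x) − f(y))/(x − y) if x ≠ y, and H(x,x) = f'(x). Then H is continuously differentiable on ℝ². -/

import Mathlib

set_option maxHeartbeats 1000000

open MeasureTheory intervalIntegral Metric Set

/-- The linear map `p ↦ p.2 + t * (p.1 - p.2)`. -/
noncomputable def phiL (t : ℝ) : ℝ × ℝ →L[ℝ] ℝ :=
  ContinuousLinearMap.snd ℝ ℝ ℝ +
    t • (ContinuousLinearMap.fst ℝ ℝ ℝ - ContinuousLinearMap.snd ℝ ℝ ℝ)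

lemma phiL_apply (t : ℝ) (p : ℝ × ℝ) : phiL t p = p.2 + t * (p.1 - p.2) := by
  simp [phiL]

lemma phiL_norm_le (t : ℝ) (ht : |t| ≤ 1) : ‖phiL t‖ ≤ 3 := by
  apply ContinuousLinearMap.opNorm_le_bound _ (by norm_num)
  intro p
  rw [phiL_apply, Real.norm_eq_abs]
  have h1 : |p.1| ≤ ‖p‖ := by simpa using norm_fst_le p
  have h2 : |p.2| ≤ ‖p‖ := by simpa using norm_snd_le p
  have h3 : |p.2 + t * (p.1 - p.2)| ≤ |p.2| + |t| * |p.1 - p.2| := by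
    calc |p.2 + t * (p.1 - p.2)| ≤ |p.2| + |t * (p.1 - p.2)| := abs_add_le _ _
      _ = |p.2| + |t| * |p.1 - p.2| := by rw [abs_mul]
  have h4 : |p.1 - p.2| ≤ |p.1| + |p.2| := abs_sub _ _
  nlinarith [abs_nonneg t, abs_nonneg (p.1 - p.2), norm_nonneg p]

lemma continuous_phiL : Continuous phiL := by
  unfold phiL
  fun_prop

/-- If `f : ℝ → ℝ` is three times continuously differentiable and `H` is its
divided-difference (slope) function, extended to the diagonal by the derivative, then `H` is
continuously differentiable on `ℝ²`. -/
theorem divided_difference_C1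
    (f : ℝ → ℝ) (hf : ContDiff ℝ 3 f)
    (H : ℝ × ℝ → ℝ)
    (hH_off : ∀ x y : ℝ, x ≠ y → H (x, y) = (f x - f y) / (x - y))
    (hH_diag : ∀ x : ℝ, H (x, x) = deriv f x) :
    ContDiff ℝ 1 H := by
  -- basic regularity facts
  have hf2 : ContDiff ℝ 2 (deriv f) := by
    have h := (contDiff_succ_iff_deriv (n := 2)).1 (by exact_mod_cast hf)
    exact h.2.2
  have hdf : Differentiable ℝ f := hf.differentiable (by norm_num)
  have hdf1 : Differentiable ℝ (deriv f) := hf2.differentiable (by norm_num)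
  have hcont1 : Continuous (deriv f) := hdf1.continuous
  have hcont2 : Continuous (deriv (deriv f)) := by
    have h := (contDiff_succ_iff_deriv (n := 1)).1 (by exact_mod_cast hf2)
    exact h.2.2.continuous
  set G : ℝ × ℝ → ℝ := fun p => ∫ t in (0:ℝ)..1, deriv f (phiL t p) with hG
  set G' : ℝ × ℝ → (ℝ × ℝ →L[ℝ] ℝ) :=
    fun p => ∫ t in (0:ℝ)..1, deriv (deriv f) (phiL t p) • phiL t with hG'
  -- joint continuity of the integrands
  have hjc : Continuous fun q : (ℝ × ℝ) × ℝ => deriv f (phiL q.2 q.1) := by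
    apply hcont1.comp
    simp only [phiL_apply]
    fun_prop
  have hjc' : Continuous fun q : (ℝ × ℝ) × ℝ => deriv (deriv f) (phiL q.2 q.1) • phiL q.2 := by
    apply Continuous.fun_smul
    · apply hcont2.comp
      simp only [phiL_apply]
      fun_prop
    · exact continuous_phiL.comp continuous_snd
  -- differentiation under the integral sign
  have key : ∀ p : ℝ × ℝ, HasFDerivAt G (G' p) p := by
    intro p
    -- bound for the second derivative near p
    obtain ⟨C, hC⟩ := (isCompact_closedBall (0:ℝ) (3 * (‖p‖ + 1))).exists_bound_of_continuousOn
      hcont2.continuousOn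
    have hmem : ∀ t ∈ Set.uIoc (0:ℝ) 1, ∀ x ∈ ball p 1, phiL t x ∈ closedBall (0:ℝ) (3 * (‖p‖ + 1)) := by
      intro t ht x hx
      have ht' : t ∈ Ioc (0:ℝ) 1 := by
        rwa [Set.uIoc_of_le (by norm_num : (0:ℝ) ≤ 1)] at ht
      have hxn : ‖x‖ ≤ ‖p‖ + 1 := by
        have h5 : ‖x‖ ≤ ‖p‖ + ‖x - p‖ := by simpa using norm_add_le p (x - p)
        have h6 : ‖x - p‖ < 1 := by rwa [mem_ball, dist_eq_norm] at hx
        linarith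
      simp only [mem_closedBall, dist_zero_right]
      rw [phiL_apply]
      have h1 : |x.1| ≤ ‖x‖ := by
        simpa using (norm_fst_le x)
      have h2 : |x.2| ≤ ‖x‖ := by
        simpa using (norm_snd_le x)
      calc ‖x.2 + t * (x.1 - x.2)‖ ≤ |x.2| + |t| * (|x.1| + |x.2|) := by
            rw [Real.norm_eq_abs]
            calc |x.2 + t * (x.1 - x.2)| ≤ |x.2| + |t * (x.1 - x.2)| := abs_add_le _ _
              _ = |x.2| + |t| * |x.1 - x.2| := by rw [abs_mul]
              _ ≤ |x.2| + |t| * (|x.1| + |x.2|) := by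
                  gcongr
                  exact abs_sub _ _
        _ ≤ (‖p‖ + 1) + 1 * ((‖p‖ + 1) + (‖p‖ + 1)) := by
            gcongr
            · exact h2.trans hxn
            · rw [abs_le]; constructor <;> nlinarith [ht'.1, ht'.2]
            · exact h1.trans hxn
            · exact h2.trans hxn
        _ = 3 * (‖p‖ + 1) := by ring
    have hC0 : 0 ≤ max C 0 := le_max_right _ _
    apply intervalIntegral.hasFDerivAt_integral_of_dominated_of_fderiv_le
      (F := fun x t => deriv f (phiL t x))
      (F' := fun x t => deriv (deriv f) (phiL t x) • phiL t)
      (bound := fun _ => (max C 0) * 3) (s := ball p 1) (ball_mem_nhds p one_pos)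
    · filter_upwards with x
      exact (hjc.comp (Continuous.prodMk_right x)).aestronglyMeasurable
    · exact (hjc.comp (Continuous.prodMk_right p)).intervalIntegrable 0 1
    · exact (hjc'.comp (Continuous.prodMk_right p)).aestronglyMeasurable
    · filter_upwards with t
      intro ht x hx
      have habs : |t| ≤ 1 := by
        rw [Set.uIoc_of_le (by norm_num : (0:ℝ) ≤ 1)] at ht
        rw [abs_le]; constructor <;> linarith [ht.1, ht.2]
      calc ‖deriv (deriv f) (phiL t x) • phiL t‖
          = ‖deriv (deriv f) (phiL t x)‖ * ‖phiL t‖ := norm_smul (β := ℝ × ℝ →L[ℝ] ℝ) _ _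
        _ ≤ (max C 0) * 3 := by
            gcongr
            · exact (hC _ (hmem t ht x hx)).trans (le_max_left _ _)
            · exact phiL_norm_le t habs
    · exact intervalIntegrable_const
    · filter_upwards with t
      intro _ x _
      exact (hdf1 (phiL t x)).hasDerivAt.comp_hasFDerivAt x (phiL t).hasFDerivAt
  -- continuity of the derivative
  have hG'cont : Continuous G' := by
    exact intervalIntegral.continuous_parametric_intervalIntegral_of_continuous'
      (f := fun p t => deriv (deriv f) (phiL t p) • phiL t) (μ := volume) hjc' 0 1
  -- G is C¹
  have hGC1 : ContDiff ℝ 1 G := by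
    rw [contDiff_one_iff_fderiv]
    refine ⟨fun p => (key p).differentiableAt, ?_⟩
    have : (fderiv ℝ G) = G' := funext fun p => (key p).fderiv
    rw [this]
    exact hG'cont
  -- H = G
  have hHG : H = G := by
    funext p
    obtain ⟨x, y⟩ := p
    by_cases hxy : x = y
    · subst hxy
      rw [hH_diag]
      simp only [hG, phiL_apply]
      simp
    · rw [hH_off x y hxy]
      have hmain : ∫ t in (0:ℝ)..1, (x - y) * deriv f (y + t * (x - y)) = f x - f y := by
        have := intervalIntegral.integral_eq_sub_of_hasDerivAt
          (f := fun t : ℝ => f (y + t * (x - y)))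
          (f' := fun t : ℝ => (x - y) * deriv f (y + t * (x - y)))
          (a := 0) (b := 1) ?_ ?_
        · simpa using this
        · intro t _
          have hin : HasDerivAt (fun t : ℝ => y + t * (x - y)) (x - y) t :=
            (hasDerivAt_mul_const (x - y)).const_add y
          have := ((hdf (y + t * (x - y))).hasDerivAt).comp t hin
          simpa [mul_comm, Function.comp_def] using this
        · apply Continuous.intervalIntegrable
          fun_prop
      have hne : x - y ≠ 0 := sub_ne_zero.2 hxy
      rw [intervalIntegral.integral_const_mul] at hmain
      simp only [hG, phiL_apply]
      field_simp
      simp only [mul_comm (x - y)] at hmain ⊢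
      linarith [hmain]
  rw [hHG]
  exact hGC1
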